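/- For any fixed 0 < a < b, lim_{κ→∞} limsup_{T→∞} Prob{ sup_{t∈[aT, bT]} |Z_t|/r_T ≥ κ } = 0. -/

import Mathlib

open MeasureTheory Filter Real Set ProbabilityTheory

noncomputable section

/-- The `ℓ¹`-norm of a lattice point, as a real number. -/
def lnorm {d : ℕ} (z : Fin d → ℤ) : ℝ := ∑ i, |(z i : ℝ)|

/-- The number of nearest-neighbour lattice paths of length `‖z‖₁` from the origin to `z`. -/
def numPaths (d : ℕ) (z : Fin d → ℤ) : ℕ :=
  Set.ncard {p : Fin (∑ i, (z i).natAbs + 1) → (Fin d → ℤ) |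
    p 0 = 0 ∧ p (Fin.last _) = z ∧
    ∀ i : Fin (∑ i, (z i).natAbs), (∑ j, ((p i.succ j) - (p i.castSucc j)).natAbs) = 1}

/-- `η(z)`: the logarithm of the number of paths of length `‖z‖₁` from `0` to `z`. -/
def pathEntropy {d : ℕ} (z : Fin d → ℤ) : ℝ := Real.log (numPaths d z)

/-- The functional `Φ_t` associated with a potential `ξ`:
`Φ_t(z) = ξ(z) - (|z|/t) log ξ(z) + η(z)/t` if `t ξ(z) ≥ |z|`, and `0` otherwise. -/
def Phi {d : ℕ} (ξ : (Fin d → ℤ) → ℝ) (t : ℝ) (z : Fin d → ℤ) : ℝ :=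
  if lnorm z ≤ t * ξ z then ξ z - lnorm z / t * Real.log (ξ z) + pathEntropy z / t else 0

/-- The spatial scaling function `r_t = (t / log t) ^ (α/(α-d))`. -/
def rScale (α : ℝ) (d : ℕ) (t : ℝ) : ℝ := (t / Real.log t) ^ (α / (α - d))

/-- The scaling function `a_t = (t / log t) ^ (d/(α-d))`. -/
def aScale (α : ℝ) (d : ℕ) (t : ℝ) : ℝ := (t / Real.log t) ^ ((d : ℝ) / (α - d))

/-- The potential `ξ` is a family of i.i.d. Pareto(α) random variables:
they are measurable, independent, and `P {ξ(z) ≤ x} = 1 - x^(-α)` for `x ≥ 1`. -/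
def IsParetoPotential {d : ℕ} {Ω : Type*} [MeasurableSpace Ω] (P : Measure Ω)
    (α : ℝ) (ξ : (Fin d → ℤ) → Ω → ℝ) : Prop :=
  (∀ z, Measurable (ξ z)) ∧
  iIndepFun ξ P ∧
  (∀ z x, 1 ≤ x → P {ω | ξ z ω ≤ x} = ENNReal.ofReal (1 - x ^ (-α)))


-- ===== auxiliary lemmas =====

lemma lnorm_eq {d : ℕ} (z : Fin d → ℤ) : lnorm z = ((∑ i, (z i).natAbs : ℕ) : ℝ) := by
  unfold lnorm
  push_cast
  refine Finset.sum_congr rfl fun i _ => ?_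
  rw [Nat.cast_natAbs, Int.cast_abs]

lemma lnorm_nonneg {d : ℕ} (z : Fin d → ℤ) : 0 ≤ lnorm z := by
  rw [lnorm_eq]; positivity

lemma lnorm_zero {d : ℕ} : lnorm (0 : Fin d → ℤ) = 0 := by
  simp [lnorm]

lemma numPaths_zero (d : ℕ) : numPaths d 0 = 1 := by
  unfold numPaths
  have hs : (∑ i, ((0 : Fin d → ℤ) i).natAbs) = 0 := by simp
  have : {p : Fin (∑ i, ((0 : Fin d → ℤ) i).natAbs + 1) → (Fin d → ℤ) |
      p 0 = 0 ∧ p (Fin.last _) = 0 ∧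
      ∀ i : Fin (∑ i, ((0 : Fin d → ℤ) i).natAbs),
        (∑ j, ((p i.succ j) - (p i.castSucc j)).natAbs) = 1} =
      {fun _ => 0} := by
    ext p
    simp only [Set.mem_setOf_eq, Set.mem_singleton_iff]
    constructor
    · rintro ⟨h0, -, -⟩
      funext k
      have hk : k = 0 := by
        have h2 := k.isLt
        ext
        simp only [Fin.val_zero]
        omega
      rw [hk, h0]
    · rintro rfl
      refine ⟨rfl, rfl, fun i => ?_⟩
      exact absurd i.isLt (by omega)
  rw [this, Set.ncard_singleton]

lemma pathEntropy_zero (d : ℕ) : pathEntropy (0 : Fin d → ℤ) = 0 := by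
  unfold pathEntropy
  rw [numPaths_zero]
  simp

def enc3 : ℤ → Fin 3 := fun x => if x = -1 then 0 else if x = 0 then 1 else 2

lemma enc3_inj {x y : ℤ} (hx : x.natAbs ≤ 1) (hy : y.natAbs ≤ 1) (h : enc3 x = enc3 y) :
    x = y := by
  have hx' : x = -1 ∨ x = 0 ∨ x = 1 := by omega
  have hy' : y = -1 ∨ y = 0 ∨ y = 1 := by omega
  unfold enc3 at h
  rcases hx' with rfl|rfl|rfl <;> rcases hy' with rfl|rfl|rfl <;> simp_all

lemma numPaths_le_ncard (d : ℕ) (z : Fin d → ℤ) :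
    Set.ncard {p : Fin (∑ i, (z i).natAbs + 1) → (Fin d → ℤ) |
      p 0 = 0 ∧ p (Fin.last _) = z ∧
      ∀ i : Fin (∑ i, (z i).natAbs), (∑ j, ((p i.succ j) - (p i.castSucc j)).natAbs) = 1}
      ≤ 3 ^ (d * ∑ i, (z i).natAbs) := by
  set L := ∑ i, (z i).natAbs with hL
  set S := {p : Fin (L + 1) → (Fin d → ℤ) |
      p 0 = 0 ∧ p (Fin.last _) = z ∧
      ∀ i : Fin L, (∑ j, ((p i.succ j) - (p i.castSucc j)).natAbs) = 1} with hS
  have key : Function.Injective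
      (fun (p : S) => (fun (i : Fin L) (j : Fin d) => enc3 (p.1 i.succ j - p.1 i.castSucc j))) := by
    intro x y hxy
    obtain ⟨hp0, -, hps⟩ := x.2
    obtain ⟨hq0, -, hqs⟩ := y.2
    set p := x.1 with hp
    set q := y.1 with hq
    apply Subtype.ext
    have hstep : ∀ (i : Fin L) (j : Fin d),
        p i.succ j - p i.castSucc j = q i.succ j - q i.castSucc j := by
      intro i j
      have h1 : (p i.succ j - p i.castSucc j).natAbs ≤ 1 := by
        rw [← hps i]
        exact Finset.single_le_sum (f := fun j => (p i.succ j - p i.castSucc j).natAbs)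
          (fun _ _ => Nat.zero_le _) (Finset.mem_univ j)
      have h2 : (q i.succ j - q i.castSucc j).natAbs ≤ 1 := by
        rw [← hqs i]
        exact Finset.single_le_sum (f := fun j => (q i.succ j - q i.castSucc j).natAbs)
          (fun _ _ => Nat.zero_le _) (Finset.mem_univ j)
      have h4 := congrFun (congrFun hxy i) j
      exact enc3_inj h1 h2 (by simpa using h4)
    have main : ∀ (m : ℕ) (hm : m < L + 1), p ⟨m, hm⟩ = q ⟨m, hm⟩ := by
      intro m
      induction m with
      | zero => intro hm; rw [show (⟨0, hm⟩ : Fin (L+1)) = 0 from rfl, hp0, hq0]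
      | succ n ih =>
        intro hm
        have hn : n < L := by omega
        have hi := hstep ⟨n, hn⟩
        have hcs : (⟨n, hn⟩ : Fin L).castSucc = ⟨n, by omega⟩ := rfl
        have hsc : (⟨n, hn⟩ : Fin L).succ = ⟨n + 1, hm⟩ := rfl
        rw [hcs, hsc] at hi
        funext j
        have := hi j
        have h3 := congrFun (ih (by omega)) j
        omega
    show p = q
    funext k
    have := main k.val k.isLt
    simpa using this
  have hfin : Nat.card S ≤ Nat.card (Fin L → Fin d → Fin 3) :=
    Nat.card_le_card_of_injective _ key
  have hcard : Nat.card (Fin L → Fin d → Fin 3) = 3 ^ (d * L) := by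
    simp [Nat.card_eq_fintype_card, Fintype.card_fun, ← pow_mul]
  rw [← Nat.card_coe_set_eq]
  omega

lemma numPaths_le (d : ℕ) (z : Fin d → ℤ) :
    numPaths d z ≤ 3 ^ (d * ∑ i, (z i).natAbs) := by
  unfold numPaths
  exact numPaths_le_ncard d z

lemma pathEntropy_le {d : ℕ} (z : Fin d → ℤ) :
    pathEntropy z ≤ lnorm z * (d * Real.log 3) := by
  have h3 : (0:ℝ) ≤ Real.log 3 := Real.log_nonneg (by norm_num)
  unfold pathEntropy
  rcases Nat.eq_zero_or_pos (numPaths d z) with h | h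
  · rw [h]
    simp only [Nat.cast_zero, Real.log_zero]
    have := lnorm_nonneg z
    positivity
  · calc Real.log (numPaths d z) ≤ Real.log ((3:ℝ) ^ (d * ∑ i, (z i).natAbs)) := by
          apply Real.log_le_log (by exact_mod_cast h)
          exact_mod_cast numPaths_le d z
    _ = (d * ∑ i, (z i).natAbs : ℕ) * Real.log 3 := by
          rw [Real.log_pow]
    _ = lnorm z * (d * Real.log 3) := by
          rw [lnorm_eq]
          push_cast
          ring

lemma Phi_zero_eq {d : ℕ} (ξω : (Fin d → ℤ) → ℝ) (t : ℝ) (ht : 0 < t)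
    (h0 : 0 ≤ ξω 0) : Phi ξω t 0 = ξω 0 := by
  unfold Phi
  rw [lnorm_zero, pathEntropy_zero, if_pos (by positivity)]
  simp

lemma core_bound {d : ℕ} (ξω : (Fin d → ℤ) → ℝ) (t B R M : ℝ) (z : Fin d → ℤ)
    (ht1 : 1 ≤ t) (htB : t ≤ B) (hB : 0 < B)
    (h0 : 0 < ξω 0)
    (hmax : Phi ξω t 0 ≤ Phi ξω t z)
    (hn : R ≤ lnorm z) (hRB : 2 ≤ R / B)
    (hM : Real.log (R / B) = 2 * M) (hM1 : 1 ≤ M)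
    (hc : 2 * (d * Real.log 3) ≤ 2 * M) :
    lnorm z / B * M ≤ ξω z := by
  have ht : (0:ℝ) < t := lt_of_lt_of_le one_pos ht1
  rw [Phi_zero_eq ξω t ht h0.le] at hmax
  set n := lnorm z with hndef
  have hRB' : 2 * B ≤ R := (le_div_iff₀ hB).mp hRB
  have hn0 : 0 < n := by linarith
  set u := ξω z with hu
  -- the if-branch must be active
  by_cases hcond : n ≤ t * u
  swap
  · exfalso
    unfold Phi at hmax
    rw [if_neg (by rwa [← hndef])] at hmax
    linarith
  have hPhi : u - n / t * Real.log u + pathEntropy z / t ≥ ξω 0 := by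
    unfold Phi at hmax
    rwa [if_pos (by rwa [← hndef])] at hmax
  have ht' : 0 < t := ht
  have hun : n / t ≤ u := (div_le_iff₀' ht).mpr hcond
  have hnB2 : 2 ≤ n / B := le_trans hRB (by gcongr)
  have hBt : n / B ≤ n / t := by gcongr
  have hunB : n / B ≤ u := le_trans hBt hun
  have hu2 : 2 ≤ u := le_trans hnB2 hunB
  have hlogu : Real.log (n / B) ≤ Real.log u := Real.log_le_log (by positivity) hunB
  have hlognB : Real.log (R / B) ≤ Real.log (n / B) := Real.log_le_log (by positivity) (by gcongr)
  have hη : pathEntropy z ≤ n * (d * Real.log 3) := pathEntropy_le z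
  have h5 : M ≤ Real.log u - d * Real.log 3 := by linarith
  have key : n / t * M ≤ u := by
    have hnt : (0:ℝ) ≤ n / t := by positivity
    calc n / t * M ≤ n / t * (Real.log u - d * Real.log 3) :=
          mul_le_mul_of_nonneg_left h5 hnt
      _ = n / t * Real.log u - n * (d * Real.log 3) / t := by ring
      _ ≤ u := by
          have h6 : pathEntropy z / t ≤ n * (d * Real.log 3) / t := by gcongr
          linarith
  calc n / B * M ≤ n / t * M := by
        apply mul_le_mul_of_nonneg_right hBt (by linarith)
    _ ≤ u := key

lemma bernoulli_aux {x r : ℝ} (hx0 : 0 < x) (hx1 : x < 1) (hr : 0 < r) :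
    1 + r * x ≤ (1 - x) ^ (-r) := by
  have h1 : (0:ℝ) < 1 - x := by linarith
  have h2 : (1 - x) ^ (-r) = Real.exp (-r * Real.log (1 - x)) := by
    rw [Real.rpow_def_of_pos h1]; ring_nf
  have h3 : Real.log (1 - x) ≤ -x := by
    have := Real.log_le_sub_one_of_pos h1
    linarith
  have h4 : r * x ≤ -r * Real.log (1 - x) := by nlinarith
  calc 1 + r * x ≤ Real.exp (r * x) := by linarith [Real.add_one_le_exp (r * x)]
    _ ≤ Real.exp (-r * Real.log (1 - x)) := Real.exp_le_exp.mpr h4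
    _ = (1 - x) ^ (-r) := h2.symm

-- key telescoping bound
lemma key_step {s : ℝ} (hs : 1 < s) {m : ℕ} (hm : 2 ≤ m) :
    (m : ℝ) ^ (-s) ≤ (((m - 1 : ℕ) : ℝ) ^ (1 - s) - (m : ℝ) ^ (1 - s)) / (s - 1) := by
  have hm0 : (0:ℝ) < m := by positivity
  have hmR : (2:ℝ) ≤ m := by exact_mod_cast hm
  set x : ℝ := 1 / m with hxdef
  have hx0 : 0 < x := by positivity
  have hx1 : x < 1 := by
    rw [hxdef, div_lt_one hm0]; linarith
  have hr : 0 < s - 1 := by linarith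
  have hmm : ((m - 1 : ℕ) : ℝ) = (m : ℝ) * (1 - x) := by
    have : ((m - 1 : ℕ) : ℝ) = (m : ℝ) - 1 := by
      have : 1 ≤ m := by omega
      push_cast [Nat.cast_sub this]
      ring
    rw [this, hxdef]
    field_simp
  have hber := bernoulli_aux hx0 hx1 hr
  have hsplit : ((m - 1 : ℕ) : ℝ) ^ (1 - s) = (m : ℝ) ^ (1 - s) * (1 - x) ^ (1 - s) := by
    rw [hmm, Real.mul_rpow hm0.le (by linarith)]
  -- (1-x)^(1-s) = (1-x)^(-(s-1)) ≥ 1 + (s-1) x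
  have h1x : (1 - x) ^ (1 - s) = (1 - x) ^ (-(s - 1)) := by ring_nf
  have hfin : (m:ℝ)^(1-s) * (1 + (s-1)*x) ≤ ((m - 1 : ℕ) : ℝ) ^ (1 - s) := by
    rw [hsplit, h1x]
    have hp : (0:ℝ) ≤ (m:ℝ)^(1-s) := (Real.rpow_pos_of_pos hm0 _).le
    exact mul_le_mul_of_nonneg_left hber hp
  -- m^{1-s} * (s-1) * x = (s-1) m^{-s}
  have hxs : (m:ℝ)^(1-s) * x = (m:ℝ)^(-s) := by
    rw [hxdef]
    rw [div_eq_mul_inv, one_mul, ← Real.rpow_neg_one (m:ℝ)]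
    rw [← Real.rpow_add hm0]
    norm_num
    ring_nf
  rw [le_div_iff₀ hr]
  nlinarith [hfin, hxs]

lemma tail_rpow (s : ℝ) (hs : 1 < s) :
    ∀ R : ℝ, 2 ≤ R →
      (∑' n : ℕ, (if R ≤ (n:ℝ) then ENNReal.ofReal ((n:ℝ) ^ (-s)) else 0))
        ≤ ENNReal.ofReal ((2 ^ (s-1) / (s-1)) * R ^ (1-s)) := by
  intro R hR
  have hr : 0 < s - 1 := by linarith
  set N := ⌈R⌉₊ with hN
  have hRN : R ≤ (N:ℝ) := Nat.le_ceil R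
  have hN2 : 2 ≤ N := by
    have : (2:ℝ) ≤ (N:ℝ) := le_trans hR hRN
    exact_mod_cast this
  have hN1 : 1 ≤ N := by omega
  set φ : ℕ → ℝ := fun m => (m:ℝ) ^ (1 - s) with hφ
  have hφ0 : ∀ m, 0 ≤ φ m := fun m => by
    rcases Nat.eq_zero_or_pos m with h|h
    · simp [hφ, h]
      rw [Real.zero_rpow (by linarith)]
    · exact (Real.rpow_pos_of_pos (by exact_mod_cast h) _).le
  -- partial sums over Ico N M
  have hIco : ∀ M, N ≤ M → ∑ n ∈ Finset.Ico N M, (n:ℝ)^(-s) ≤ (φ (N-1) - φ (M-1)) / (s-1) := by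
    intro M
    induction M with
    | zero => intro h; interval_cases N <;> simp_all
    | succ M ih =>
      intro hNM
      rcases Nat.lt_or_ge M N with h|h
      · have he : Finset.Ico N (M+1) = ∅ := Finset.Ico_eq_empty (by omega)
        rw [he]
        have h2 : N - 1 = M + 1 - 1 := by omega
        rw [h2, sub_self]
        simp
      · have hM2 : 2 ≤ M := le_trans hN2 h
        rw [Finset.sum_Ico_succ_top h]
        have hstep := key_step hs hM2
        have := ih h
        have hsimp : M + 1 - 1 = M := by omega
        rw [hsimp]
        have : (φ (N-1) - φ (M-1))/(s-1) + (φ (M-1) - φ M)/(s-1) = (φ (N-1) - φ M)/(s-1) := by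
          ring
        calc ∑ n ∈ Finset.Ico N M, (n:ℝ)^(-s) + (M:ℝ)^(-s)
            ≤ (φ (N-1) - φ (M-1))/(s-1) + (φ (M-1) - φ M)/(s-1) := by
              apply add_le_add (ih h)
              exact hstep
          _ = (φ (N-1) - φ M)/(s-1) := this
  have hpartial : ∀ M, ∑ n ∈ Finset.Ico N M, (n:ℝ)^(-s) ≤ φ (N-1) / (s-1) := by
    intro M
    rcases Nat.lt_or_ge M N with h|h
    · rw [Finset.Ico_eq_empty (by omega)]
      simp
      positivity
    · calc ∑ n ∈ Finset.Ico N M, (n:ℝ)^(-s) ≤ (φ (N-1) - φ (M-1)) / (s-1) := hIco M h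
        _ ≤ φ (N-1) / (s-1) :=
            div_le_div_of_nonneg_right (by linarith [hφ0 (M-1)]) hr.le
  -- final bound on φ(N-1)/(s-1)
  have hfinal : φ (N-1) / (s-1) ≤ (2 ^ (s-1) / (s-1)) * R ^ (1-s) := by
    have hcast : ((N-1:ℕ):ℝ) = (N:ℝ) - 1 := by
      push_cast [Nat.cast_sub hN1]; ring
    have hge : R/2 ≤ ((N-1:ℕ):ℝ) := by rw [hcast]; linarith
    have hφN : φ (N-1) ≤ (R/2) ^ (1-s) :=
      Real.rpow_le_rpow_of_nonpos (by linarith) hge (by linarith)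
    have hRs : (R/2) ^ (1-s) = R ^ (1-s) * 2 ^ (s-1) := by
      rw [Real.div_rpow (by linarith) (by norm_num),
        show (1-s) = -(s-1) by ring, Real.rpow_neg (by norm_num : (0:ℝ) ≤ 2)]
      rw [div_inv_eq_mul]
    calc φ (N-1) / (s-1) ≤ (R ^ (1-s) * 2 ^ (s-1)) / (s-1) := by
          apply div_le_div_of_nonneg_right _ hr.le
          rw [← hRs]; exact hφN
      _ = (2 ^ (s-1) / (s-1)) * R ^ (1-s) := by ring
  -- tsum to partial sums
  rw [ENNReal.tsum_eq_iSup_sum]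
  apply iSup_le
  intro F
  obtain ⟨M, hFM⟩ := F.exists_nat_subset_range
  have hrhs0 : 0 ≤ (2 ^ (s-1) / (s-1)) * R ^ (1-s) := by
    apply mul_nonneg (div_nonneg (by positivity) hr.le) (Real.rpow_nonneg (by linarith) _)
  calc ∑ n ∈ F, (if R ≤ (n:ℝ) then ENNReal.ofReal ((n:ℝ)^(-s)) else 0)
      ≤ ∑ n ∈ Finset.range M, (if R ≤ (n:ℝ) then ENNReal.ofReal ((n:ℝ)^(-s)) else 0) :=
        Finset.sum_le_sum_of_subset hFM
    _ = ENNReal.ofReal (∑ n ∈ Finset.range M, (if R ≤ (n:ℝ) then (n:ℝ)^(-s) else 0)) := by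
        rw [ENNReal.ofReal_sum_of_nonneg (fun i _ => by positivity)]
        apply Finset.sum_congr rfl
        intro n _
        split_ifs with h
        · rfl
        · simp
    _ ≤ ENNReal.ofReal ((2 ^ (s-1) / (s-1)) * R ^ (1-s)) := by
        apply ENNReal.ofReal_le_ofReal
        rcases le_or_gt N M with h|h
        · have hsplit : Finset.range M = Finset.Ico 0 M := by rw [Finset.range_eq_Ico]
          rw [hsplit, ← Finset.sum_Ico_consecutive _ (Nat.zero_le N) h]
          have h1 : ∑ n ∈ Finset.Ico 0 N, (if R ≤ (n:ℝ) then (n:ℝ)^(-s) else 0) = 0 := by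
            apply Finset.sum_eq_zero
            intro n hn
            rw [if_neg]
            intro hc
            have := Nat.ceil_le.mpr hc
            have := Finset.mem_Ico.mp hn
            omega
          have h2 : ∑ n ∈ Finset.Ico N M, (if R ≤ (n:ℝ) then (n:ℝ)^(-s) else 0)
              = ∑ n ∈ Finset.Ico N M, (n:ℝ)^(-s) := by
            apply Finset.sum_congr rfl
            intro n hn
            rw [if_pos]
            have hn2 := (Finset.mem_Ico.mp hn).1
            calc R ≤ (N:ℝ) := hRN
              _ ≤ (n:ℝ) := by exact_mod_cast hn2
          rw [h1, h2, zero_add]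
          exact le_trans (hpartial M) hfinal
        · have : ∑ n ∈ Finset.range M, (if R ≤ (n:ℝ) then (n:ℝ)^(-s) else 0) = 0 := by
            apply Finset.sum_eq_zero
            intro n hn
            rw [if_neg]
            intro hc
            have := Nat.ceil_le.mpr hc
            have := Finset.mem_range.mp hn
            omega
          rw [this]
          exact hrhs0

section Fiber
variable (e : ℕ)

def latL (e : ℕ) (z : Fin (e+1) → ℤ) : ℕ := ∑ i, (z i).natAbs

lemma fiber_finite_card (n : ℕ) :
    ∃ _ : Finite {z : Fin (e+1) → ℤ // latL e z = n},
      Nat.card {z : Fin (e+1) → ℤ // latL e z = n} ≤ 2^(e+1) * (n+1)^e := by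
  classical
  set F := {z : Fin (e+1) → ℤ // latL e z = n}
  have habs : ∀ (z : F) (j : Fin (e+1)), (z.1 j).natAbs ≤ n := by
    rintro ⟨z, hz⟩ j
    calc (z j).natAbs ≤ ∑ i, (z i).natAbs :=
          Finset.single_le_sum (f := fun i => (z i).natAbs) (fun _ _ => Nat.zero_le _)
            (Finset.mem_univ j)
      _ = n := hz
  let J : F → (Fin (e+1) → Fin 2) × (Fin e → Fin (n+1)) :=
    fun z => (fun j => if 0 ≤ z.1 j then 0 else 1,
              fun j => ⟨(z.1 j.castSucc).natAbs, Nat.lt_succ_of_le (habs z j.castSucc)⟩)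
  have hJ : Function.Injective J := by
    intro z w h
    have h1 := congrArg Prod.fst h
    have h2 := congrArg Prod.snd h
    simp only [J] at h1 h2
    have hcs : ∀ j' : Fin e, (z.1 (Fin.castSucc j')).natAbs = (w.1 (Fin.castSucc j')).natAbs :=
      fun j' => congrArg Fin.val (congrFun h2 j')
    have habsall : ∀ j : Fin (e+1), (z.1 j).natAbs = (w.1 j).natAbs := by
      intro j
      refine Fin.lastCases ?_ (fun j' => hcs j') j
      have hz := z.2; have hw := w.2
      unfold latL at hz hw
      rw [Fin.sum_univ_castSucc] at hz hw
      have hsum : ∑ j', (z.1 (Fin.castSucc j')).natAbs = ∑ j', (w.1 (Fin.castSucc j')).natAbs :=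
        Finset.sum_congr rfl (fun j' _ => hcs j')
      omega
    apply Subtype.ext
    funext j
    have hsign := congrFun h1 j
    have habs' := habsall j
    by_cases hz0 : 0 ≤ z.1 j <;> by_cases hw0 : 0 ≤ w.1 j
    · omega
    · rw [if_pos hz0, if_neg hw0] at hsign
      exact absurd hsign (by decide)
    · rw [if_neg hz0, if_pos hw0] at hsign
      exact absurd hsign (by decide)
    · omega
  exact ⟨Finite.of_injective J hJ, by
    haveI : Finite F := Finite.of_injective J hJ
    calc Nat.card F ≤ Nat.card ((Fin (e+1) → Fin 2) × (Fin e → Fin (n+1))) :=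
          Nat.card_le_card_of_injective J hJ
      _ = 2^(e+1) * (n+1)^e := by
          simp [Nat.card_eq_fintype_card, Fintype.card_fun]⟩
end Fiber

lemma lattice_tail (e : ℕ) (α : ℝ) (hα : ((e:ℝ)+1) < α) :
    ∃ C : ℝ, 0 < C ∧ ∀ R : ℝ, 2 ≤ R →
      (∑' z : Fin (e+1) → ℤ, (if R ≤ lnorm z then ENNReal.ofReal ((lnorm z) ^ (-α)) else 0))
        ≤ ENNReal.ofReal (C * R ^ (((e:ℝ)+1) - α)) := by
  classical
  set s : ℝ := α - e with hsdef
  have hs : 1 < s := by rw [hsdef]; linarith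
  set Ce : ℝ := 2^(e+1) * 2^e with hCe
  have hCe0 : 0 < Ce := by positivity
  set Cs : ℝ := 2 ^ (s-1) / (s-1) with hCs
  have hCs0 : 0 < Cs := by
    apply div_pos (Real.rpow_pos_of_pos (by norm_num) _) (by linarith)
  refine ⟨Ce * Cs, by positivity, fun R hR => ?_⟩
  set h : ℕ → ENNReal := fun n => if R ≤ (n:ℝ) then ENNReal.ofReal ((n:ℝ) ^ (-α)) else 0
    with hh
  have step1 : (∑' z : Fin (e+1) → ℤ,
      (if R ≤ lnorm z then ENNReal.ofReal ((lnorm z) ^ (-α)) else 0))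
      = ∑' z : Fin (e+1) → ℤ, h (latL e z) := by
    apply tsum_congr
    intro z
    have : lnorm z = ((latL e z : ℕ) : ℝ) := lnorm_eq z
    rw [this, hh]
  have step2 : (∑' z : Fin (e+1) → ℤ, h (latL e z))
      = ∑' (n : ℕ), ∑' (_ : {z : Fin (e+1) → ℤ // latL e z = n}), h n := by
    rw [← Equiv.tsum_eq (Equiv.sigmaFiberEquiv (latL e)) (fun z => h (latL e z))]
    have e0 : ∀ (c : (y : ℕ) × { x // latL e x = y }),
        h (latL e ((Equiv.sigmaFiberEquiv (latL e)) c)) = h c.1 := by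
      rintro ⟨n, x, hx⟩
      simp [Equiv.sigmaFiberEquiv, hx]
    rw [tsum_congr e0]
    exact ENNReal.tsum_sigma (fun n (_ : {z // latL e z = n}) => h n)
  have step3 : ∀ n : ℕ, (∑' (_ : {z : Fin (e+1) → ℤ // latL e z = n}), h n)
      ≤ ENNReal.ofReal Ce * (if R ≤ (n:ℝ) then ENNReal.ofReal ((n:ℝ) ^ (-s)) else 0) := by
    intro n
    obtain ⟨hfin, hcard⟩ := fiber_finite_card e n
    haveI := hfin
    letI := Fintype.ofFinite {z : Fin (e+1) → ℤ // latL e z = n}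
    have e2 : (∑' (_ : {z : Fin (e+1) → ℤ // latL e z = n}), h n)
        = (Nat.card {z : Fin (e+1) → ℤ // latL e z = n} : ENNReal) * h n := by
      rw [tsum_fintype]
      rw [Finset.sum_const, Finset.card_univ, Nat.card_eq_fintype_card, nsmul_eq_mul]
    rw [e2, hh]
    simp only
    split_ifs with hRn
    · have hn2 : (2:ℝ) ≤ (n:ℝ) := le_trans hR hRn
      have hn0 : (0:ℝ) < (n:ℝ) := by linarith
      have hreal : ((2^(e+1) * (n+1)^e : ℕ) : ℝ) * (n:ℝ) ^ (-α) ≤ Ce * (n:ℝ) ^ (-s) := by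
        have hb : ((n:ℝ)+1)^e ≤ 2^e * (n:ℝ)^e := by
          calc ((n:ℝ)+1)^e ≤ (2*(n:ℝ))^e := pow_le_pow_left₀ (by positivity) (by linarith) e
            _ = 2^e * (n:ℝ)^e := mul_pow 2 (n:ℝ) e
        have hrw : (n:ℝ)^(e:ℕ) * (n:ℝ)^(-α) = (n:ℝ)^(-s) := by
          rw [← Real.rpow_natCast (n:ℝ) e, ← Real.rpow_add hn0]
          congr 1
          rw [hsdef]; ring
        have hnn : (0:ℝ) ≤ (n:ℝ) ^ (-α) := Real.rpow_nonneg hn0.le _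
        calc ((2^(e+1) * (n+1)^e : ℕ) : ℝ) * (n:ℝ) ^ (-α)
            = 2^(e+1) * (((n:ℝ)+1)^e * (n:ℝ)^(-α)) := by push_cast; ring
          _ ≤ 2^(e+1) * ((2^e * (n:ℝ)^e) * (n:ℝ)^(-α)) := by
              apply mul_le_mul_of_nonneg_left _ (by positivity)
              exact mul_le_mul_of_nonneg_right hb hnn
          _ = Ce * ((n:ℝ)^(e:ℕ) * (n:ℝ)^(-α)) := by rw [hCe]; ring
          _ = Ce * (n:ℝ)^(-s) := by rw [hrw]
      calc (Nat.card {z : Fin (e+1) → ℤ // latL e z = n} : ENNReal) * ENNReal.ofReal ((n:ℝ) ^ (-α))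
          ≤ ((2^(e+1) * (n+1)^e : ℕ) : ENNReal) * ENNReal.ofReal ((n:ℝ) ^ (-α)) := by
            apply mul_le_mul_left
            exact_mod_cast hcard
        _ = ENNReal.ofReal (((2^(e+1) * (n+1)^e : ℕ) : ℝ) * (n:ℝ) ^ (-α)) := by
            rw [← ENNReal.ofReal_natCast, ← ENNReal.ofReal_mul (by positivity)]
        _ ≤ ENNReal.ofReal (Ce * (n:ℝ) ^ (-s)) := ENNReal.ofReal_le_ofReal hreal
        _ = ENNReal.ofReal Ce * ENNReal.ofReal ((n:ℝ) ^ (-s)) := ENNReal.ofReal_mul hCe0.le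
    · simp
  have hexp : 1 - s = ((e:ℝ)+1) - α := by rw [hsdef]; ring
  calc (∑' z : Fin (e+1) → ℤ,
      (if R ≤ lnorm z then ENNReal.ofReal ((lnorm z) ^ (-α)) else 0))
      = ∑' (n : ℕ), ∑' (_ : {z : Fin (e+1) → ℤ // latL e z = n}), h n := by rw [step1, step2]
    _ ≤ ∑' (n : ℕ), ENNReal.ofReal Ce * (if R ≤ (n:ℝ) then ENNReal.ofReal ((n:ℝ) ^ (-s)) else 0) :=
        ENNReal.tsum_le_tsum step3
    _ = ENNReal.ofReal Ce * ∑' (n : ℕ), (if R ≤ (n:ℝ) then ENNReal.ofReal ((n:ℝ) ^ (-s)) else 0) :=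
        ENNReal.tsum_mul_left
    _ ≤ ENNReal.ofReal Ce * ENNReal.ofReal (Cs * R ^ (1-s)) :=
        mul_le_mul_right (by
          have := tail_rpow s hs R hR
          rw [hCs]
          exact this) _
    _ = ENNReal.ofReal (Ce * Cs * R ^ (((e:ℝ)+1) - α)) := by
        rw [← ENNReal.ofReal_mul hCe0.le, hexp]
        ring_nf

lemma tail_prob {d : ℕ} {Ω : Type*} [MeasurableSpace Ω] {P : Measure Ω}
    [IsProbabilityMeasure P] {α : ℝ} (hα0 : 0 < α) {ξ : (Fin d → ℤ) → Ω → ℝ}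
    (hξ : IsParetoPotential P α ξ) (z : Fin d → ℤ) (x : ℝ) (hx : 2 ≤ x) :
    P {ω | x ≤ ξ z ω} ≤ ENNReal.ofReal ((x/2) ^ (-α)) := by
  have hmeas : MeasurableSet {ω | ξ z ω ≤ x - 1} := (hξ.1 z) measurableSet_Iic
  have hcdf := hξ.2.2 z (x-1) (by linarith)
  have hle1 : (x-1) ^ (-α) ≤ 1 :=
    Real.rpow_le_one_of_one_le_of_nonpos (by linarith) (by linarith)
  have hge0 : 0 ≤ (x-1) ^ (-α) := Real.rpow_nonneg (by linarith) _
  calc P {ω | x ≤ ξ z ω} ≤ P {ω | ξ z ω ≤ x - 1}ᶜ := by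
        apply measure_mono
        intro ω hω
        simp only [Set.mem_compl_iff, Set.mem_setOf_eq] at *
        linarith
    _ = 1 - P {ω | ξ z ω ≤ x - 1} := by
        rw [measure_compl hmeas (measure_ne_top P _), measure_univ]
    _ = 1 - ENNReal.ofReal (1 - (x-1) ^ (-α)) := by rw [hcdf]
    _ ≤ ENNReal.ofReal ((x-1) ^ (-α)) := by
        rw [tsub_le_iff_right, ← ENNReal.ofReal_add hge0 (by linarith)]
        rw [show (x-1)^(-α) + (1 - (x-1)^(-α)) = 1 by ring]
        simp
    _ ≤ ENNReal.ofReal ((x/2) ^ (-α)) := by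
        apply ENNReal.ofReal_le_ofReal
        apply Real.rpow_le_rpow_of_nonpos (by linarith) (by linarith) (by linarith)


set_option maxHeartbeats 1000000 in
/-- **The maximizer stays in a box of side `O(r_T)` on `[aT, bT]`.**
For fixed `0 < a < b`, `lim_{κ→∞} limsup_{T→∞} Prob {sup_{t∈[aT,bT]} |Z_t|/r_T ≥ κ} = 0`. -/
theorem maximizer_in_box (d : ℕ) (hd : 1 ≤ d) (α : ℝ) (hα : (d:ℝ) < α)
    {Ω : Type*} [MeasurableSpace Ω] (P : Measure Ω) [IsProbabilityMeasure P]
    (ξ : (Fin d → ℤ) → Ω → ℝ) (hξ : IsParetoPotential P α ξ)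
    (Z : Ω → ℝ → (Fin d → ℤ))
    (hZmeas : ∀ t : ℝ, Measurable (fun ω => Z ω t))
    (hZ : ∀ᵐ ω ∂P, ∀ t : ℝ, 1 ≤ t →
        (∀ z, Phi (fun w => ξ w ω) t z ≤ Phi (fun w => ξ w ω) t (Z ω t)) ∧
        (∀ᶠ s in nhdsWithin t (Set.Ici t), Z ω s = Z ω t))
    (a b : ℝ) (ha : 0 < a) (hab : a < b) :
    Tendsto (fun κ : ℝ =>
        Filter.limsup (fun T : ℝ =>
          P {ω | κ ≤ ⨆ t ∈ Set.Icc (a * T) (b * T), lnorm (Z ω t) / rScale α d T}) atTop)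
      atTop (nhds 0) := by
  classical
  obtain ⟨e, rfl⟩ : ∃ e, d = e + 1 := ⟨d - 1, by omega⟩
  set D : ℝ := ((e + 1 : ℕ) : ℝ) with hD
  have hDe : D = (e:ℝ) + 1 := by rw [hD]; push_cast; ring
  have hD1 : 1 ≤ D := by
    rw [hDe]
    have : (0:ℝ) ≤ (e:ℝ) := by positivity
    linarith
  have hαD : 0 < α - D := by
    have : D < α := hα
    linarith
  have hα0 : 0 < α := by linarith
  obtain ⟨Cd, hCd0, hCd⟩ := lattice_tail e α (by rw [← hDe]; exact hα)
  set q' : ℝ := α / (α - D) with hq'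
  have hq'1 : 1 < q' := by
    rw [hq', lt_div_iff₀ hαD]
    linarith
  have hq'0 : 0 < q' := by linarith
  set c₄ : ℝ := (q' - 1) / 4 with hc₄
  have hc₄0 : 0 < c₄ := by rw [hc₄]; linarith
  set C5 : ℝ := (2 * b / c₄) ^ α * Cd with hC5
  have hb0 : 0 < b := lt_trans ha hab
  have hC50 : 0 < C5 := by
    rw [hC5]
    apply mul_pos (Real.rpow_pos_of_pos (div_pos (by linarith) hc₄0) _) hCd0
  set K0 : ℝ := max 2 (2 * (D * Real.log 3)) with hK0
  -- the a.e. good sets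
  set Q : Ω → Prop := fun ω => ∀ t : ℝ, 1 ≤ t →
      (∀ z, Phi (fun w => ξ w ω) t z ≤ Phi (fun w => ξ w ω) t (Z ω t)) ∧
      (∀ᶠ s in nhdsWithin t (Set.Ici t), Z ω s = Z ω t) with hQdef
  have hnull1 : P {ω | ¬ Q ω} = 0 := ae_iff.mp hZ
  have hnull2 : P {ω | ¬ (0 < ξ 0 ω)} = 0 := by
    have hsub : {ω | ¬ (0 < ξ 0 ω)} ⊆ {ω | ξ 0 ω ≤ 1} := by
      intro ω hω
      simp only [Set.mem_setOf_eq, not_lt] at *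
      linarith
    have h10 : P {ω | ξ 0 ω ≤ 1} = 0 := by
      have := hξ.2.2 0 1 le_rfl
      rw [this]
      simp [Real.one_rpow]
    exact measure_mono_null hsub h10
  -- the key limsup bound for fixed κ ≥ 3
  have key : ∀ κ : ℝ, 3 ≤ κ →
      Filter.limsup (fun T : ℝ =>
        P {ω | κ ≤ ⨆ t ∈ Set.Icc (a * T) (b * T), lnorm (Z ω t) / rScale α (e+1) T}) atTop
      ≤ ENNReal.ofReal (C5 * (κ - 1) ^ (D - α)) := by
    intro κ hκ
    have hκ1 : 2 ≤ κ - 1 := by linarith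
    refine Filter.limsup_le_of_le (by isBoundedDefault) ?_
    -- eventual facts
    have hloglog : (fun T : ℝ => Real.log (Real.log T)) =o[atTop] fun T => Real.log T :=
      Real.isLittleO_log_id_atTop.comp_tendsto Real.tendsto_log_atTop
    have evA : ∀ᶠ T : ℝ in atTop, 1 ≤ a * T := by
      have : Tendsto (fun T : ℝ => a * T) atTop atTop :=
        Tendsto.const_mul_atTop ha tendsto_id
      exact this.eventually_ge_atTop 1
    have evB : ∀ᶠ T : ℝ in atTop, 1 ≤ Real.log T :=
      Real.tendsto_log_atTop.eventually_ge_atTop 1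
    have evC : ∀ᶠ T : ℝ in atTop,
        q' * Real.log (Real.log T) ≤ (q' - 1) / 4 * Real.log T := by
      have hc : 0 < (q' - 1) / (4 * q') := div_pos (by linarith) (by linarith)
      filter_upwards [hloglog.def hc, evB] with T h1 h2
      rw [Real.norm_eq_abs, Real.norm_eq_abs] at h1
      have h3 : Real.log (Real.log T) ≤ (q' - 1) / (4 * q') * Real.log T := by
        calc Real.log (Real.log T) ≤ |Real.log (Real.log T)| := le_abs_self _
          _ ≤ (q' - 1) / (4 * q') * |Real.log T| := h1
          _ = (q' - 1) / (4 * q') * Real.log T := by rw [abs_of_nonneg (by linarith)]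
      calc q' * Real.log (Real.log T) ≤ q' * ((q' - 1) / (4 * q') * Real.log T) := by
            apply mul_le_mul_of_nonneg_left h3 hq'0.le
        _ = (q' - 1) / 4 * Real.log T := by field_simp
    have evD : ∀ᶠ T : ℝ in atTop,
        Real.log b - Real.log (κ - 1) ≤ (q' - 1) / 4 * Real.log T := by
      have : Tendsto (fun T : ℝ => (q' - 1) / 4 * Real.log T) atTop atTop :=
        Tendsto.const_mul_atTop (by linarith) Real.tendsto_log_atTop
      exact this.eventually_ge_atTop _
    have evE : ∀ᶠ T : ℝ in atTop, K0 ≤ (q' - 1) / 2 * Real.log T := by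
      have : Tendsto (fun T : ℝ => (q' - 1) / 2 * Real.log T) atTop atTop :=
        Tendsto.const_mul_atTop (by linarith) Real.tendsto_log_atTop
      exact this.eventually_ge_atTop _
    filter_upwards [evA, evB, evC, evD, evE] with T h1 h2 h3 h4 h5
    -- basic positivity
    have hT0 : 0 < T := by nlinarith
    have hlogT0 : 0 < Real.log T := by linarith
    have hTlog : 0 < T / Real.log T := div_pos hT0 hlogT0
    set r : ℝ := rScale α (e+1) T with hrdef
    have hr0 : 0 < r := Real.rpow_pos_of_pos hTlog _
    set B : ℝ := b * T with hBdef
    have hB0 : 0 < B := by positivity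
    have hB1 : 1 ≤ B := by
      calc (1:ℝ) ≤ a * T := h1
        _ ≤ b * T := by nlinarith
    set R : ℝ := (κ - 1) * r with hRdef
    have hR0 : 0 < R := by positivity
    have hlogr : Real.log r = q' * (Real.log T - Real.log (Real.log T)) := by
      rw [hrdef]
      show Real.log ((T / Real.log T) ^ (α / (α - ((e+1:ℕ):ℝ)))) = _
      rw [Real.log_rpow hTlog, Real.log_div (ne_of_gt hT0) (ne_of_gt hlogT0)]
    have h2M : Real.log (R / B) =
        Real.log (κ - 1) + Real.log r - (Real.log b + Real.log T) := by
      rw [hRdef, hBdef, Real.log_div (by positivity) (by positivity),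
        Real.log_mul (by linarith) (ne_of_gt hr0), Real.log_mul (ne_of_gt hb0) (ne_of_gt hT0)]
    set M : ℝ := Real.log (R / B) / 2 with hMdef
    have hMeq : Real.log (R / B) = 2 * M := by rw [hMdef]; ring
    have h2Mlb : (q' - 1) / 2 * Real.log T ≤ 2 * M := by
      rw [← hMeq, h2M, hlogr]
      linarith [h3, h4]
    have hM1 : 1 ≤ M := by
      have : (2:ℝ) ≤ K0 := le_max_left _ _
      linarith [le_trans this h5]
    have hc0M : 2 * (D * Real.log 3) ≤ 2 * M := by
      have : 2 * (D * Real.log 3) ≤ K0 := le_max_right _ _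
      linarith [le_trans this h5]
    have hRB2 : 2 ≤ R / B := by
      have hRB0 : 0 < R / B := by positivity
      have hlog2 : Real.log 2 ≤ Real.log (R / B) := by
        have : Real.log 2 ≤ 1 := by
          have := Real.log_le_sub_one_of_pos (by norm_num : (0:ℝ) < 2)
          linarith
        linarith
      exact (Real.log_le_log_iff (by norm_num) hRB0).mp hlog2
    have hR2 : 2 ≤ R := by
      have : 2 * B ≤ R := (le_div_iff₀ hB0).mp hRB2
      nlinarith
    have hMc₄ : c₄ * Real.log T ≤ M := by
      rw [hc₄]
      linarith
    -- the per-site event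
    set S : (Fin (e+1) → ℤ) → Set Ω :=
      fun z => {ω | R ≤ lnorm z ∧ lnorm z / B * M ≤ ξ z ω} with hSdef
    -- event inclusion
    have hincl : {ω | κ ≤ ⨆ t ∈ Set.Icc (a * T) (b * T), lnorm (Z ω t) / r}
        ⊆ ({ω | ¬ Q ω} ∪ {ω | ¬ (0 < ξ 0 ω)}) ∪ ⋃ z, S z := by
      intro ω hω
      by_cases hQω : Q ω
      swap
      · exact Or.inl (Or.inl hQω)
      by_cases hξ0 : 0 < ξ 0 ω
      swap
      · exact Or.inl (Or.inr hξ0)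
      right
      simp only [Set.mem_setOf_eq] at hω
      have hex : ∃ t ∈ Set.Icc (a * T) (b * T), κ - 1 ≤ lnorm (Z ω t) / r := by
        by_contra hcon
        push_neg at hcon
        have hsup : (⨆ t ∈ Set.Icc (a * T) (b * T), lnorm (Z ω t) / r) ≤ κ - 1 := by
          apply Real.iSup_le _ (by linarith)
          intro t
          apply Real.iSup_le _ (by linarith)
          intro ht
          exact (hcon t ht).le
        linarith
      obtain ⟨t, htmem, hκt⟩ := hex
      obtain ⟨ht1, ht2⟩ := htmem
      have htge1 : 1 ≤ t := le_trans h1 ht1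
      have hmax := (hQω t htge1).1 (0 : Fin (e+1) → ℤ)
      have hlZ : R ≤ lnorm (Z ω t) := by
        rw [hRdef]
        exact (le_div_iff₀ hr0).mp hκt
      have hcore := core_bound (fun w => ξ w ω) t B R M (Z ω t) htge1 ht2 hB0 hξ0 hmax
        hlZ hRB2 hMeq hM1 hc0M
      exact Set.mem_iUnion.mpr ⟨Z ω t, hlZ, hcore⟩
    -- per-site probability bound
    have hSz : ∀ z : Fin (e+1) → ℤ, P (S z) ≤
        (if R ≤ lnorm z then ENNReal.ofReal ((2 * B / M) ^ α * (lnorm z) ^ (-α)) else 0) := by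
      intro z
      split_ifs with hzn
      · have hn0 : 0 < lnorm z := lt_of_lt_of_le hR0 hzn
        have hM0 : 0 < M := by linarith
        have hthr2 : 2 ≤ lnorm z / B * M := by
          calc (2:ℝ) = 2 * 1 := by ring
            _ ≤ R / B * M := by
                apply mul_le_mul hRB2 hM1 (by norm_num) (by positivity)
            _ ≤ lnorm z / B * M := by gcongr
        have htail := tail_prob hα0 hξ z (lnorm z / B * M) hthr2
        have heq : (lnorm z / B * M / 2) ^ (-α) = (2 * B / M) ^ α * (lnorm z) ^ (-α) := by
          have hx0 : 0 < lnorm z / B * M / 2 := by positivity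
          rw [Real.rpow_neg hx0.le, ← Real.inv_rpow hx0.le]
          have hinv : (lnorm z / B * M / 2)⁻¹ = (2 * B / M) * (lnorm z)⁻¹ := by
            field_simp
          rw [hinv, Real.mul_rpow (by positivity) (by positivity),
            Real.inv_rpow hn0.le, ← Real.rpow_neg hn0.le]
        calc P (S z) ≤ P {ω | lnorm z / B * M ≤ ξ z ω} := by
              apply measure_mono
              intro ω hω
              exact hω.2
          _ ≤ ENNReal.ofReal ((lnorm z / B * M / 2) ^ (-α)) := htail
          _ = ENNReal.ofReal ((2 * B / M) ^ α * (lnorm z) ^ (-α)) := by rw [heq]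
      · have : S z = ∅ := by
          ext ω
          simp only [hSdef, Set.mem_setOf_eq, Set.mem_empty_iff_false, iff_false, not_and]
          intro hc
          exact absurd hc hzn
        rw [this, measure_empty]
    -- the final real inequality
    have hM0 : 0 < M := by linarith
    have hne : α - D ≠ 0 := ne_of_gt hαD
    have hfinalreal : (2 * B / M) ^ α * (Cd * R ^ (D - α)) ≤ C5 * (κ - 1) ^ (D - α) := by
      have hstepb : r ^ (D - α) = (T / Real.log T) ^ (-α) := by
        rw [hrdef]
        show ((T / Real.log T) ^ (α / (α - D))) ^ (D - α) = _
        rw [← Real.rpow_mul hTlog.le]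
        congr 1
        field_simp
        ring
      have hκ0 : (0:ℝ) ≤ κ - 1 := by linarith
      have hstepa : R ^ (D - α) = (κ - 1) ^ (D - α) * r ^ (D - α) := by
        rw [hRdef]; exact Real.mul_rpow hκ0 hr0.le
      have hc₄T : 0 < c₄ * Real.log T := by positivity
      have hstepc : 2 * B / M ≤ (2 * b / c₄) * (T / Real.log T) := by
        calc 2 * B / M ≤ 2 * B / (c₄ * Real.log T) := by
              apply div_le_div_of_nonneg_left (by positivity) hc₄T hMc₄
          _ = (2 * b / c₄) * (T / Real.log T) := by
              rw [hBdef]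
              field_simp
      have hstepc' : (2 * B / M) ^ α ≤ ((2 * b / c₄) * (T / Real.log T)) ^ α :=
        Real.rpow_le_rpow (by positivity) hstepc hα0.le
      have hd' : ((2 * b / c₄) * (T / Real.log T)) ^ α
          = (2 * b / c₄) ^ α * (T / Real.log T) ^ α := by
        apply Real.mul_rpow (by positivity) hTlog.le
      have hcancel : (T / Real.log T) ^ α * (T / Real.log T) ^ (-α) = 1 := by
        rw [← Real.rpow_add hTlog]
        simp
      have hxnn : (0:ℝ) ≤ (T / Real.log T) ^ (-α) := Real.rpow_nonneg hTlog.le _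
      have hknn : (0:ℝ) ≤ (κ - 1) ^ (D - α) := Real.rpow_nonneg hκ0 _
      calc (2 * B / M) ^ α * (Cd * R ^ (D - α))
          = (2 * B / M) ^ α * Cd * (κ - 1) ^ (D - α) * (T / Real.log T) ^ (-α) := by
            rw [hstepa, hstepb]; ring
        _ ≤ ((2 * b / c₄) ^ α * (T / Real.log T) ^ α) * Cd * (κ - 1) ^ (D - α)
              * (T / Real.log T) ^ (-α) := by
            apply mul_le_mul_of_nonneg_right _ hxnn
            apply mul_le_mul_of_nonneg_right _ hknn
            rw [← hd']
            exact mul_le_mul_of_nonneg_right hstepc' hCd0.le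
        _ = (2 * b / c₄) ^ α * Cd * (κ - 1) ^ (D - α)
              * ((T / Real.log T) ^ α * (T / Real.log T) ^ (-α)) := by ring
        _ = C5 * (κ - 1) ^ (D - α) := by rw [hcancel, hC5]; ring
    calc P {ω | κ ≤ ⨆ t ∈ Set.Icc (a * T) (b * T), lnorm (Z ω t) / r}
        ≤ P (({ω | ¬ Q ω} ∪ {ω | ¬ (0 < ξ 0 ω)}) ∪ ⋃ z, S z) := measure_mono hincl
      _ ≤ P ({ω | ¬ Q ω} ∪ {ω | ¬ (0 < ξ 0 ω)}) + P (⋃ z, S z) := measure_union_le _ _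
      _ ≤ (P {ω | ¬ Q ω} + P {ω | ¬ (0 < ξ 0 ω)}) + P (⋃ z, S z) :=
          add_le_add_left (measure_union_le _ _) _
      _ = P (⋃ z, S z) := by rw [hnull1, hnull2]; simp
      _ ≤ ∑' z, P (S z) := measure_iUnion_le _
      _ ≤ ∑' z, (if R ≤ lnorm z then ENNReal.ofReal ((2 * B / M) ^ α * (lnorm z) ^ (-α)) else 0) :=
          ENNReal.tsum_le_tsum hSz
      _ = ENNReal.ofReal ((2 * B / M) ^ α)
            * ∑' z : Fin (e+1) → ℤ, (if R ≤ lnorm z then ENNReal.ofReal ((lnorm z) ^ (-α)) else 0) := by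
          rw [← ENNReal.tsum_mul_left]
          apply tsum_congr
          intro z
          split_ifs with hzz
          · rw [ENNReal.ofReal_mul (by positivity)]
          · rw [mul_zero]
      _ ≤ ENNReal.ofReal ((2 * B / M) ^ α) * ENNReal.ofReal (Cd * R ^ ((e:ℝ) + 1 - α)) :=
          mul_le_mul_right (hCd R hR2) _
      _ ≤ ENNReal.ofReal (C5 * (κ - 1) ^ (D - α)) := by
          rw [← ENNReal.ofReal_mul (by positivity)]
          apply ENNReal.ofReal_le_ofReal
          have hDee : (e:ℝ) + 1 - α = D - α := by rw [hDe]
          rw [hDee]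
          exact hfinalreal
  -- final squeeze in κ
  have hsq : Tendsto (fun κ : ℝ => ENNReal.ofReal (C5 * (κ - 1) ^ (D - α))) atTop (nhds 0) := by
    have h1 : Tendsto (fun κ : ℝ => κ - 1) atTop atTop :=
      tendsto_atTop_add_const_right _ _ tendsto_id
    have h2 : Tendsto (fun x : ℝ => x ^ (D - α)) atTop (nhds 0) := by
      have h := tendsto_rpow_neg_atTop (y := α - D) (by linarith)
      have heq : (fun x : ℝ => x ^ (D - α)) = fun x : ℝ => x ^ (-(α - D)) := by
        funext x; congr 1; ring
      rw [heq]; exact h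
    have h3 := (h2.comp h1).const_mul C5
    rw [mul_zero] at h3
    have h4 := (ENNReal.continuous_ofReal.tendsto 0).comp h3
    rw [ENNReal.ofReal_zero] at h4
    exact h4
  apply tendsto_of_tendsto_of_tendsto_of_le_of_le' tendsto_const_nhds hsq
  · exact Eventually.of_forall fun κ => zero_le
  · filter_upwards [eventually_ge_atTop 3] with κ hκ3 using key κ hκ3
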